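/- For any c > 0, if φ(z) = φ_c(z + λ/c) − (1/(2c))‖λ‖², then λ ∈ ∂φ(z). -/

import Mathlib

/-- The Moreau envelope of `φ` with parameter `c`. -/
noncomputable def moreauEnv {H : Type*} [NormedAddCommGroup H] [InnerProductSpace ℝ H]
    (φ : H → ℝ) (c : ℝ) (z : H) : ℝ :=
  ⨅ u : H, (φ u + c / 2 * ‖u - z‖ ^ 2)

set_option maxHeartbeats 1000000 in
theorem env_eq_implies_subgrad (H : Type*) [NormedAddCommGroup H] [InnerProductSpace ℝ H]
    [CompleteSpace H]
    (φ : H → ℝ) (hconv : ConvexOn ℝ Set.univ φ) (hlsc : LowerSemicontinuous φ)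
    (c : ℝ) (hc : 0 < c) (z lam : H)
    (h : φ z = moreauEnv φ c (z + c⁻¹ • lam) - 1 / (2 * c) * ‖lam‖ ^ 2) :
    ∀ y : H, φ z + (inner ℝ lam (y - z) : ℝ) ≤ φ y := by
  intro y
  set w := z + c⁻¹ • lam with hw
  -- lsc at z gives a local lower bound
  obtain ⟨δ, hδ, hball⟩ : ∃ δ > 0, ∀ x : H, ‖x - z‖ < δ → φ z - 1 < φ x := by
    have h1 := hlsc z (φ z - 1) (by linarith)
    rw [Metric.eventually_nhds_iff] at h1
    obtain ⟨δ, hδ, h'⟩ := h1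
    exact ⟨δ, hδ, fun x hx => h' (by simpa [dist_eq_norm] using hx)⟩
  -- linear minorant
  have hlin : ∀ u : H, φ z - 1 - (2/δ) * ‖u - z‖ ≤ φ u := by
    intro u
    by_cases hr : ‖u - z‖ < δ
    · have := hball u hr
      have hnn : 0 ≤ (2/δ) * ‖u - z‖ :=
        mul_nonneg (by positivity) (norm_nonneg _)
      linarith
    · push_neg at hr
      set r := ‖u - z‖ with hrdef
      have hrpos : 0 < r := lt_of_lt_of_le hδ hr
      set t : ℝ := δ / (2 * r) with htdef
      have htpos : 0 < t := by positivity
      have ht1 : t ≤ 1/2 := by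
        rw [htdef, div_le_iff₀ (by positivity)]
        nlinarith
      set xt : H := (1 - t) • z + t • u with hxt
      have hxtz : xt - z = t • (u - z) := by rw [hxt]; module
      have hnxt : ‖xt - z‖ < δ := by
        rw [hxtz, norm_smul, Real.norm_eq_abs, abs_of_pos htpos, ← hrdef]
        rw [htdef]
        rw [div_mul_eq_mul_div, mul_comm]
        rw [div_lt_iff₀ (by positivity)]
        nlinarith
      have hcv : φ xt ≤ (1 - t) * φ z + t * φ u := by
        have := hconv.2 (Set.mem_univ z) (Set.mem_univ u)
          (by linarith : (0:ℝ) ≤ 1 - t) htpos.le (by ring)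
        simpa [hxt] using this
      have hlow := hball xt hnxt
      -- φ z - 1 < (1-t) φ z + t φ u  ⇒  φ u > φ z - 1/t = φ z - 2r/δ
      have h2 : -1 < t * (φ u - φ z) := by nlinarith
      have htr : t * (2 * r) = δ := by rw [htdef]; field_simp
      have hd : δ * (φ u - φ z) = (2 * r) * (t * (φ u - φ z)) := by
        rw [← htr]; ring
      have hd2 : -(2 * r) < δ * (φ u - φ z) := by
        rw [hd]
        have := mul_lt_mul_of_pos_left h2 (by positivity : (0:ℝ) < 2 * r)
        linarith
      have h7 : (2/δ) * r * δ = 2 * r := by field_simp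
      nlinarith [hd2, hδ, h7]
  -- bounded below
  have hbdd : BddBelow (Set.range fun u : H => φ u + c / 2 * ‖u - w‖ ^ 2) := by
    refine ⟨φ z - 1 - (2/δ) * ‖w - z‖ - (2/δ)^2 / (2*c), ?_⟩
    rintro _ ⟨u, rfl⟩
    have h1 := hlin u
    have h2 : ‖u - z‖ ≤ ‖u - w‖ + ‖w - z‖ := by
      calc ‖u - z‖ = ‖(u - w) + (w - z)‖ := by abel_nf
        _ ≤ ‖u - w‖ + ‖w - z‖ := norm_add_le _ _
    set B := 2/δ with hB
    have hBnn : 0 ≤ B := by positivity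
    set s := ‖u - w‖ with hs
    have hsnn : 0 ≤ s := norm_nonneg _
    have key : -(B^2/(2*c)) ≤ c/2 * s^2 - B * s := by
      have expand : c/2 * s^2 - B*s + B^2/(2*c) = (c*s - B)^2 / (2*c) := by
        field_simp; ring
      have hpos : (0:ℝ) ≤ (c*s - B)^2 / (2*c) := by positivity
      linarith [expand, hpos]
    have h3 : B * ‖u - z‖ ≤ B * (s + ‖w - z‖) :=
      mul_le_mul_of_nonneg_left h2 hBnn
    simp only []
    nlinarith
  -- key inequality for each small t
  have key : ∀ t : ℝ, 0 < t → t ≤ 1 →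
      φ z + (inner ℝ lam (y - z) : ℝ) ≤ φ y + c * t / 2 * ‖y - z‖^2 := by
    intro t htpos ht1
    set u : H := (1 - t) • z + t • y with hu
    have hM : moreauEnv φ c w ≤ φ u + c / 2 * ‖u - w‖ ^ 2 := ciInf_le hbdd u
    have hφu : φ u ≤ (1 - t) * φ z + t * φ y := by
      have := hconv.2 (Set.mem_univ z) (Set.mem_univ y)
        (by linarith : (0:ℝ) ≤ 1 - t) htpos.le (by ring)
      simpa [hu] using this
    have huw : u - w = t • (y - z) - c⁻¹ • lam := by rw [hu, hw]; module
    have hnorm : ‖u - w‖^2 = t^2 * ‖y - z‖^2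
        - 2 * t * c⁻¹ * (inner ℝ lam (y - z) : ℝ) + c⁻¹^2 * ‖lam‖^2 := by
      rw [huw, norm_sub_sq_real, norm_smul, norm_smul, real_inner_smul_left,
        real_inner_smul_right, Real.norm_eq_abs, Real.norm_eq_abs,
        abs_of_pos htpos, abs_of_pos (inv_pos.mpr hc), mul_pow, mul_pow,
        real_inner_comm (y - z) lam]
      ring
    have hcc : c * c⁻¹ = 1 := mul_inv_cancel₀ hc.ne'
    have hmain : φ z + 1/(2*c) * ‖lam‖^2 ≤
        (1 - t) * φ z + t * φ y + c/2 * (t^2 * ‖y - z‖^2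
          - 2*t*c⁻¹*(inner ℝ lam (y - z) : ℝ) + c⁻¹^2 * ‖lam‖^2) := by
      rw [← hnorm]
      linarith [hM, hφu, h]
    have hsimp : c/2 * (t^2 * ‖y - z‖^2 - 2*t*c⁻¹*(inner ℝ lam (y - z) : ℝ)
          + c⁻¹^2 * ‖lam‖^2)
        = c/2 * t^2 * ‖y - z‖^2 - t * (inner ℝ lam (y - z) : ℝ)
          + 1/(2*c) * ‖lam‖^2 := by
      field_simp
    rw [hsimp] at hmain
    have h5 : t * (φ z + (inner ℝ lam (y - z) : ℝ))
        ≤ t * (φ y + c * t / 2 * ‖y - z‖^2) := by nlinarith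
    exact le_of_mul_le_mul_left h5 htpos
  -- conclude by letting t → 0
  refine le_of_forall_pos_le_add ?_
  intro ε hε
  set Q : ℝ := ‖y - z‖^2 with hQ
  have hQnn : 0 ≤ Q := by rw [hQ]; positivity
  set a : ℝ := c/2 * Q with ha
  have hann : 0 ≤ a := by positivity
  set t : ℝ := min 1 (ε / (1 + a)) with ht
  have htpos : 0 < t := lt_min one_pos (by positivity)
  have ht1 : t ≤ 1 := min_le_left _ _
  have hk := key t htpos ht1
  have hta : c * t / 2 * Q ≤ ε := by
    have h1 : t ≤ ε / (1 + a) := min_le_right _ _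
    have h2 : c * t / 2 * Q = t * a := by rw [ha]; ring
    rw [h2]
    have h3 : t * a ≤ (ε / (1 + a)) * a := mul_le_mul_of_nonneg_right h1 hann
    have h4 : (ε / (1 + a)) * a ≤ ε := by
      rw [div_mul_eq_mul_div, div_le_iff₀ (by positivity : (0:ℝ) < 1 + a)]
      nlinarith [hε.le, hann]
    linarith
  linarith
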